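/- With tanh activation ψ, weight w = s₁(x^{(2)}−x^{(1)})/‖x^{(2)}−x^{(1)}‖² and bias b = ⟨w, x^{(1)}⟩ + s₂ where s₂ = ln(3)/2 and s₁ = 2s₂, the neuron n(x) = ψ(⟨w,x⟩ − b) satisfies n(x^{(1)}) = −1/2, n(x^{(2)}) = 1/2, and n((x^{(1)}+x^{(2)})/2) = 0. -/

import Mathlib

lemma tanh_half_log3 : Real.tanh (Real.log 3 / 2) = 1/2 := by
  have he : (0:ℝ) < Real.exp (Real.log 3 / 2) := Real.exp_pos _
  have h3 : Real.exp (Real.log 3 / 2) * Real.exp (Real.log 3 / 2) = 3 := by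
    rw [← Real.exp_add]
    have : Real.log 3 / 2 + Real.log 3 / 2 = Real.log 3 := by ring
    rw [this, Real.exp_log]; norm_num
  rw [Real.tanh_eq_sinh_div_cosh, Real.sinh_eq, Real.cosh_eq, Real.exp_neg]
  field_simp
  nlinarith [he]

theorem tanh_sampled_neuron_values {D : ℕ}
    (x1 x2 : EuclideanSpace ℝ (Fin D)) (hx : x1 ≠ x2)
    (s₁ s₂ : ℝ) (hs₂ : s₂ = Real.log 3 / 2) (hs₁ : s₁ = 2 * s₂)
    (w : EuclideanSpace ℝ (Fin D)) (hw : w = (s₁ / ‖x2 - x1‖ ^ 2) • (x2 - x1))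
    (b : ℝ) (hb : b = (inner ℝ w x1 : ℝ) + s₂)
    (n : EuclideanSpace ℝ (Fin D) → ℝ) (hn : ∀ x, n x = Real.tanh ((inner ℝ w x : ℝ) - b)) :
    n x1 = -(1/2) ∧ n x2 = 1/2 ∧ n ((1/2 : ℝ) • (x1 + x2)) = 0 := by
  have hne : x2 - x1 ≠ 0 := sub_ne_zero.mpr (Ne.symm hx)
  have hn2 : ‖x2 - x1‖ ^ 2 ≠ 0 := pow_ne_zero _ (norm_ne_zero_iff.mpr hne)
  have hdiff : (inner ℝ w (x2 - x1) : ℝ) = s₁ := by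
    rw [hw, real_inner_smul_left, real_inner_self_eq_norm_sq]
    field_simp
  have h2 : (inner ℝ w x2 : ℝ) = (inner ℝ w x1 : ℝ) + s₁ := by
    rw [inner_sub_right] at hdiff; linarith
  have htanh : Real.tanh s₂ = 1/2 := by rw [hs₂]; exact tanh_half_log3
  refine ⟨?_, ?_, ?_⟩
  · rw [hn, hb]
    have : (inner ℝ w x1 : ℝ) - ((inner ℝ w x1 : ℝ) + s₂) = -s₂ := by ring
    rw [this, Real.tanh_neg, htanh]
  · rw [hn, hb, h2]
    have : (inner ℝ w x1 : ℝ) + s₁ - ((inner ℝ w x1 : ℝ) + s₂) = s₂ := by rw [hs₁]; ring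
    rw [this, htanh]
  · rw [hn, hb]
    have hm : (inner ℝ w ((1/2 : ℝ) • (x1 + x2)) : ℝ)
        = (1/2) * ((inner ℝ w x1 : ℝ) + (inner ℝ w x2 : ℝ)) := by
      rw [real_inner_smul_right, inner_add_right]
    rw [hm, h2]
    have : (1/2) * ((inner ℝ w x1 : ℝ) + ((inner ℝ w x1 : ℝ) + s₁)) - ((inner ℝ w x1 : ℝ) + s₂) = 0 := by
      rw [hs₁]; ring
    rw [this, Real.tanh_zero]
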